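/- Uniform-index form of Lemma 1 (second equality of Lemma 17.12 of Csiszár–Körner): Let R₁, R₂ be finite-valued random variables and X^n = (X₁,…,X_n), Y^n = (Y₁,…,Y_n) finite-valued sequences on a common probability space, and let J be uniformly distributed on {1,…,n} and independent of (R₁, R₂, X^n, Y^n). Set V = (X₁,…,X_{J−1}, Y_{J+1},…,Y_n, R₂, J). Then I(R₁;X^n|R₂) − I(R₁;Y^n|R₂) = n·[ I(R₁;X_J|V) − I(R₁;Y_J|V) ]. -/

import Mathlib

open scoped BigOperators Classical

noncomputable section

namespace CRGen

/-- A probability mass function on a finite type. -/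
def IsPMF {α : Type*} [Fintype α] (p : α → ℝ) : Prop :=
  (∀ a, 0 ≤ p a) ∧ ∑ a, p a = 1

/-- Shannon entropy to base 2 of a pmf on a finite type (`0 log 0 = 0`). -/
def entPMF {α : Type*} [Fintype α] (p : α → ℝ) : ℝ :=
  - ∑ a, p a * Real.logb 2 (p a)

/-- Distribution (pushforward pmf) of a random variable on a finite probability
space with pmf `μ`. -/
def dist {Ω α : Type*} [Fintype Ω] (μ : Ω → ℝ) (X : Ω → α) : α → ℝ :=
  fun a => ∑ ω, if X ω = a then μ ω else 0

/-- Shannon entropy (base 2) of a random variable. -/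
def H {Ω α : Type*} [Fintype Ω] [Fintype α] (μ : Ω → ℝ) (X : Ω → α) : ℝ :=
  entPMF (dist μ X)

/-- Conditional entropy `H(X|Y)`. -/
def condH {Ω α β : Type*} [Fintype Ω] [Fintype α] [Fintype β]
    (μ : Ω → ℝ) (X : Ω → α) (Y : Ω → β) : ℝ :=
  H μ (fun ω => (X ω, Y ω)) - H μ Y

/-- Mutual information `I(X;Y)`. -/
def MI {Ω α β : Type*} [Fintype Ω] [Fintype α] [Fintype β]
    (μ : Ω → ℝ) (X : Ω → α) (Y : Ω → β) : ℝ :=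
  H μ X + H μ Y - H μ (fun ω => (X ω, Y ω))

/-- Conditional mutual information `I(X;Y|Z)`. -/
def condMI {Ω α β γ : Type*} [Fintype Ω] [Fintype α] [Fintype β] [Fintype γ]
    (μ : Ω → ℝ) (X : Ω → α) (Y : Ω → β) (Z : Ω → γ) : ℝ :=
  H μ (fun ω => (X ω, Z ω)) + H μ (fun ω => (Y ω, Z ω))
    - H μ (fun ω => (X ω, (Y ω, Z ω))) - H μ Z

/-- First marginal of a joint pmf on a product. -/
def margFst {α β : Type*} [Fintype α] [Fintype β] (q : α × β → ℝ) : α → ℝ :=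
  fun a => ∑ b, q (a, b)

/-- Second marginal of a joint pmf on a product. -/
def margSnd {α β : Type*} [Fintype α] [Fintype β] (q : α × β → ℝ) : β → ℝ :=
  fun b => ∑ a, q (a, b)

/-- Mutual information of a joint pmf on a product. -/
def miPMF {α β : Type*} [Fintype α] [Fintype β] (q : α × β → ℝ) : ℝ :=
  entPMF (margFst q) + entPMF (margSnd q) - entPMF q

/-- The (variable-length) prefix `x₁,…,x_{j−1}` of a vector, encoded as a masked
vector: entries at positions `≥ j` are replaced by `none`. -/
def maskPre {𝒳 : Type} {n : ℕ} (xv : Fin n → 𝒳) (j : Fin n) : Fin n → Option 𝒳 :=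
  fun i => if (i : ℕ) < (j : ℕ) then some (xv i) else none

/-- The (variable-length) suffix `y_{j+1},…,y_n` of a vector, encoded as a masked
vector: entries at positions `≤ j` are replaced by `none`. -/
def maskSuf {𝒴 : Type} {n : ℕ} (yv : Fin n → 𝒴) (j : Fin n) : Fin n → Option 𝒴 :=
  fun i => if (j : ℕ) < (i : ℕ) then some (yv i) else none

/-- generic pushforward of a distribution along a map. -/
lemma dist_comp {Ω α β : Type*} [Fintype Ω] [Fintype α] (μ : Ω → ℝ)
    (Z : Ω → α) (f : α → β) (c : β) :
    dist μ (fun ω => f (Z ω)) c = ∑ a, (if f a = c then dist μ Z a else 0) := by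
  classical
  unfold dist
  have h : ∀ a : α, (if f a = c then ∑ ω, (if Z ω = a then μ ω else 0) else 0)
      = ∑ ω, (if Z ω = a ∧ f a = c then μ ω else 0) := by
    intro a
    split_ifs with h
    · exact Finset.sum_congr rfl (fun ω _ => by simp [h])
    · exact (Finset.sum_eq_zero (fun ω _ => by simp [h])).symm
  simp only [h]
  rw [Finset.sum_comm]
  refine Finset.sum_congr rfl (fun ω _ => ?_)
  rw [Finset.sum_eq_single (Z ω)]
  · simp
  · intro a _ ha; rw [if_neg]; rintro ⟨h1, _⟩; exact ha h1.symm
  · simp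

lemma dist_nonneg' {Ω α : Type*} [Fintype Ω] (μ : Ω → ℝ) (hμ : ∀ ω, 0 ≤ μ ω)
    (Z : Ω → α) (a : α) : 0 ≤ dist μ Z a := by
  apply Finset.sum_nonneg
  intro ω _
  split_ifs
  · exact hμ ω
  · exact le_refl 0

lemma dist_sum {Ω α : Type*} [Fintype Ω] [Fintype α] (μ : Ω → ℝ)
    (Z : Ω → α) : ∑ a, dist μ Z a = ∑ ω, μ ω := by
  classical
  unfold dist
  rw [Finset.sum_comm]
  exact Finset.sum_congr rfl (fun ω _ => by simp)

/-- Entropy is invariant under injective post-composition. -/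
lemma H_comp_inj {Ω α β : Type*} [Fintype Ω] [Fintype α] [Fintype β]
    (μ : Ω → ℝ) (Z : Ω → α) {f : α → β} (hf : Function.Injective f) :
    H μ (fun ω => f (Z ω)) = H μ Z := by
  classical
  have hval : ∀ a, dist μ (fun ω => f (Z ω)) (f a) = dist μ Z a := by
    intro a
    unfold dist
    exact Finset.sum_congr rfl (fun ω _ => by simp [hf.eq_iff])
  have hzero : ∀ b ∈ Finset.univ, b ∉ Finset.image f Finset.univ →
      dist μ (fun ω => f (Z ω)) b * Real.logb 2 (dist μ (fun ω => f (Z ω)) b) = 0 := by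
    intro b _ hb
    have : dist μ (fun ω => f (Z ω)) b = 0 := by
      apply Finset.sum_eq_zero
      intro ω _
      rw [if_neg]
      intro h
      exact hb (Finset.mem_image.mpr ⟨Z ω, Finset.mem_univ _, h⟩)
    rw [this]; ring
  unfold H entPMF
  rw [← Finset.sum_subset (Finset.subset_univ (Finset.image f Finset.univ)) hzero]
  rw [Finset.sum_image (fun a _ b _ h => hf h)]
  congr 1
  exact Finset.sum_congr rfl (fun a _ => by rw [hval])

/-- Entropy depends only on the induced partition: mutually determining random
variables have the same entropy.  The second part prepends a common variable. -/
lemma H_det_congr {Ω α β : Type*} [Fintype Ω] [Fintype α] [Fintype β]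
    (μ : Ω → ℝ) (W : Ω → α) (W' : Ω → β) (f : α → β) (g : β → α)
    (hf : ∀ ω, f (W ω) = W' ω) (hg : ∀ ω, g (W' ω) = W ω) :
    H μ W = H μ W' := by
  have h1 : H μ (fun ω => (W ω, W' ω)) = H μ W := by
    have hi : Function.Injective (fun a : α => (a, f a)) :=
      fun a b h => congrArg Prod.fst h
    have h2 := H_comp_inj μ W hi
    rw [← h2]
    congr 1
    exact funext fun ω => by rw [hf ω]
  have h2 : H μ (fun ω => (W ω, W' ω)) = H μ W' := by
    have hi : Function.Injective (fun b : β => (g b, b)) :=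
      fun a b h => congrArg Prod.snd h
    have h2 := H_comp_inj μ W' hi
    rw [← h2]
    congr 1
    exact funext fun ω => by rw [hg ω]
  rw [← h1, h2]

/-- Mutually determining random variables have the same entropy, also after
prepending a common variable. -/
lemma H_pair_congr' {Ω ρ α β : Type*} [Fintype Ω] [Fintype ρ] [Fintype α] [Fintype β]
    (μ : Ω → ℝ) (R : Ω → ρ) (Z : Ω → α) (Z' : Ω → β) (f : α → β) (g : β → α)
    (hf : ∀ ω, f (Z ω) = Z' ω) (hg : ∀ ω, g (Z' ω) = Z ω) :
    H μ Z = H μ Z' ∧ H μ (fun ω => (R ω, Z ω)) = H μ (fun ω => (R ω, Z' ω)) := by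
  constructor
  · exact H_det_congr μ Z Z' f g hf hg
  · exact H_det_congr μ (fun ω => (R ω, Z ω)) (fun ω => (R ω, Z' ω))
      (fun z => (z.1, f z.2)) (fun z => (z.1, g z.2))
      (fun ω => by dsimp only; rw [hf ω]) (fun ω => by dsimp only; rw [hg ω])

lemma entPMF_mix {γ : Type*} [Fintype γ] {n : ℕ} (hn : 0 < n)
    (p : Fin n → γ → ℝ) (hp1 : ∀ j, ∑ c, p j c = 1)
    (π : γ → Fin n) (hsup : ∀ j c, π c ≠ j → p j c = 0) :
    entPMF (fun c => (1 / (n:ℝ)) * ∑ j, p j c)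
      = Real.logb 2 n + (1 / (n:ℝ)) * ∑ j, entPMF (p j) := by
  classical
  have hn' : (n : ℝ) ≠ 0 := Nat.cast_ne_zero.mpr hn.ne'
  have key : ∀ c, ∑ j, p j c = p (π c) c := by
    intro c
    rw [Finset.sum_eq_single (π c)]
    · intro j _ hj; exact hsup j c (Ne.symm hj)
    · simp
  have hpt : ∀ c, (1 / (n:ℝ)) * p (π c) c * Real.logb 2 ((1 / (n:ℝ)) * p (π c) c)
      = (1 / (n:ℝ)) * p (π c) c * Real.logb 2 (1 / (n:ℝ))
        + (1 / (n:ℝ)) * (p (π c) c * Real.logb 2 (p (π c) c)) := by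
    intro c
    rcases eq_or_ne (p (π c) c) 0 with h | h
    · simp [h]
    · rw [Real.logb_mul (by positivity) h]; ring
  have hsum1 : ∑ c, p (π c) c = (n : ℝ) := by
    have h : ∑ c, p (π c) c = ∑ c, ∑ j, p j c :=
      Finset.sum_congr rfl (fun c _ => (key c).symm)
    rw [h, Finset.sum_comm]
    simp [hp1]
  have hsum2 : ∀ c, p (π c) c * Real.logb 2 (p (π c) c)
      = ∑ j, p j c * Real.logb 2 (p j c) := by
    intro c
    rw [Finset.sum_eq_single (π c)]
    · intro j _ hj; rw [hsup j c (Ne.symm hj)]; ring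
    · simp
  unfold entPMF
  simp only [key]
  rw [Finset.sum_congr rfl (fun c _ => hpt c)]
  rw [Finset.sum_add_distrib]
  rw [← Finset.sum_mul, ← Finset.mul_sum, hsum1]
  rw [Finset.sum_congr rfl (fun c _ => by rw [hsum2 c] :
    ∀ c ∈ Finset.univ, (1 / (n:ℝ)) * (p (π c) c * Real.logb 2 (p (π c) c))
      = (1 / (n:ℝ)) * ∑ j, p j c * Real.logb 2 (p j c))]
  have h1 : 1 / (n:ℝ) * n = 1 := by field_simp
  rw [h1, one_mul, one_div, Real.logb_inv]
  rw [← Finset.mul_sum, Finset.sum_comm]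
  rw [show (∑ j : Fin n, -∑ a : γ, p j a * Real.logb 2 (p j a))
      = -∑ j : Fin n, ∑ a : γ, p j a * Real.logb 2 (p j a) from Finset.sum_neg_distrib _]
  ring

/-- Entropy of a variable of the form `G (J, T)` with `J` uniform and
independent of `T`, provided `J` is recoverable from the value. -/
lemma H_uniform_index {Ω τ γ : Type*} [Fintype Ω] [Fintype τ] [Fintype γ]
    {n : ℕ} (hn : 0 < n) (μ : Ω → ℝ) (hμ : IsPMF μ)
    (J : Ω → Fin n) (T : Ω → τ)
    (hJ : ∀ (j : Fin n) (t : τ), dist μ (fun ω => (J ω, T ω)) (j, t)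
        = (1 / (n:ℝ)) * dist μ T t)
    (G : Fin n → τ → γ) (π : γ → Fin n) (hπ : ∀ j t, π (G j t) = j) :
    H μ (fun ω => G (J ω) (T ω))
      = Real.logb 2 n + (1 / (n:ℝ)) * ∑ j, H μ (fun ω => G j (T ω)) := by
  classical
  set p : Fin n → γ → ℝ := fun j => dist μ (fun ω => G j (T ω)) with hp
  have hdist : dist μ (fun ω => G (J ω) (T ω)) = fun c => (1 / (n:ℝ)) * ∑ j, p j c := by
    funext c
    have h1 : dist μ (fun ω => G (J ω) (T ω)) c
        = ∑ a : Fin n × τ, (if G a.1 a.2 = c then dist μ (fun ω => (J ω, T ω)) a else 0) :=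
      dist_comp μ (fun ω => (J ω, T ω)) (fun a => G a.1 a.2) c
    rw [h1, Fintype.sum_prod_type]
    rw [Finset.mul_sum]
    refine Finset.sum_congr rfl (fun j _ => ?_)
    show _ = 1 / (n:ℝ) * dist μ (fun ω => G j (T ω)) c
    rw [dist_comp μ T (G j) c, Finset.mul_sum]
    refine Finset.sum_congr rfl (fun t _ => ?_)
    rw [hJ j t]
    split_ifs with h
    · rfl
    · ring
  have hsup : ∀ j c, π c ≠ j → p j c = 0 := by
    intro j c hc
    apply Finset.sum_eq_zero
    intro ω _
    rw [if_neg]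
    intro h
    exact hc (h ▸ (hπ j (T ω)).symm ▸ rfl)
  unfold H
  rw [hdist]
  exact entPMF_mix hn p
    (fun j => by rw [hp]; exact (dist_sum μ _).trans hμ.2) π hsup

/-- Uniform-index form of Lemma 1 (second equality of Lemma 17.12 of
Csiszár–Körner): with `J` uniform on `{1,…,n}` and independent of
`(R₁,R₂,X^n,Y^n)`, and `V = (X^{J−1}, Y_{J+1}^n, R₂, J)`,
`I(R₁;X^n|R₂) − I(R₁;Y^n|R₂) = n·[I(R₁;X_J|V) − I(R₁;Y_J|V)]`. -/
theorem uniform_index_mutual_information_identity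
    {Ω A B 𝒳 𝒴 : Type} [Fintype Ω] [Fintype A] [Fintype B] [Fintype 𝒳] [Fintype 𝒴]
    (μ : Ω → ℝ) (hμ : IsPMF μ) {n : ℕ}
    (R₁ : Ω → A) (R₂ : Ω → B) (X : Ω → Fin n → 𝒳) (Y : Ω → Fin n → 𝒴)
    (J : Ω → Fin n)
    (hJ : ∀ (j : Fin n) (t : A × B × (Fin n → 𝒳) × (Fin n → 𝒴)),
      dist μ (fun ω => (J ω, R₁ ω, R₂ ω, X ω, Y ω)) (j, t)
        = (1 / (n : ℝ)) * dist μ (fun ω => (R₁ ω, R₂ ω, X ω, Y ω)) t) :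
    condMI μ R₁ X R₂ - condMI μ R₁ Y R₂ =
      (n : ℝ) * (condMI μ R₁ (fun ω => X ω (J ω))
            (fun ω => (maskPre (X ω) (J ω), maskSuf (Y ω) (J ω), R₂ ω, J ω))
        - condMI μ R₁ (fun ω => Y ω (J ω))
            (fun ω => (maskPre (X ω) (J ω), maskSuf (Y ω) (J ω), R₂ ω, J ω))) := by
  classical
  rcases Nat.eq_zero_or_pos n with h0 | hn
  · exfalso
    haveI : IsEmpty Ω := ⟨fun ω => by have := (J ω).isLt; omega⟩
    have h1 := hμ.2
    rw [Finset.univ_eq_empty, Finset.sum_empty] at h1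
    exact one_ne_zero h1.symm
  have hn' : (n : ℝ) ≠ 0 := Nat.cast_ne_zero.mpr hn.ne'
  have hΩ : Nonempty Ω := by
    by_contra h
    rw [not_nonempty_iff] at h
    have h1 := hμ.2
    rw [Finset.univ_eq_empty, Finset.sum_empty] at h1
    exact one_ne_zero h1.symm
  obtain ⟨ω₀⟩ := hΩ
  have x₀ : 𝒳 := X ω₀ ⟨0, hn⟩
  have y₀ : 𝒴 := Y ω₀ ⟨0, hn⟩
  -- the telescoping potential function
  set ψ : ℕ → ℝ := fun k =>
      H μ (fun ω => ((fun i : Fin n => if (i : ℕ) < k then some (X ω i) else none),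
          (fun i : Fin n => if k ≤ (i : ℕ) then some (Y ω i) else none), R₂ ω))
    - H μ (fun ω => (R₁ ω, ((fun i : Fin n => if (i : ℕ) < k then some (X ω i) else none),
          (fun i : Fin n => if k ≤ (i : ℕ) then some (Y ω i) else none), R₂ ω))) with hψ
  have hψk : ∀ k : ℕ, ψ k =
      H μ (fun ω => ((fun i : Fin n => if (i : ℕ) < k then some (X ω i) else none),
          (fun i : Fin n => if k ≤ (i : ℕ) then some (Y ω i) else none), R₂ ω))
    - H μ (fun ω => (R₁ ω, ((fun i : Fin n => if (i : ℕ) < k then some (X ω i) else none),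
          (fun i : Fin n => if k ≤ (i : ℕ) then some (Y ω i) else none), R₂ ω))) :=
    fun k => by rw [hψ]
  -- Step 1: the four entropies entering `condMI` at the uniform index average
  have e1 : H μ (fun ω => (R₁ ω, (maskPre (X ω) (J ω), maskSuf (Y ω) (J ω), R₂ ω, J ω)))
      = Real.logb 2 n + (1 / (n : ℝ)) * ∑ j, H μ (fun ω =>
          (R₁ ω, (maskPre (X ω) j, maskSuf (Y ω) j, R₂ ω, j))) :=
    H_uniform_index hn μ hμ J (fun ω => (R₁ ω, R₂ ω, X ω, Y ω)) hJ
      (fun j t => (t.1, (maskPre t.2.2.1 j, maskSuf t.2.2.2 j, t.2.1, j)))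
      (fun z => z.2.2.2.2) (fun j t => rfl)
  have e2 : H μ (fun ω => (X ω (J ω), (maskPre (X ω) (J ω), maskSuf (Y ω) (J ω), R₂ ω, J ω)))
      = Real.logb 2 n + (1 / (n : ℝ)) * ∑ j, H μ (fun ω =>
          (X ω j, (maskPre (X ω) j, maskSuf (Y ω) j, R₂ ω, j))) :=
    H_uniform_index hn μ hμ J (fun ω => (R₁ ω, R₂ ω, X ω, Y ω)) hJ
      (fun j t => (t.2.2.1 j, (maskPre t.2.2.1 j, maskSuf t.2.2.2 j, t.2.1, j)))
      (fun z => z.2.2.2.2) (fun j t => rfl)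
  have e3 : H μ (fun ω => (R₁ ω, (X ω (J ω),
        (maskPre (X ω) (J ω), maskSuf (Y ω) (J ω), R₂ ω, J ω))))
      = Real.logb 2 n + (1 / (n : ℝ)) * ∑ j, H μ (fun ω =>
          (R₁ ω, (X ω j, (maskPre (X ω) j, maskSuf (Y ω) j, R₂ ω, j)))) :=
    H_uniform_index hn μ hμ J (fun ω => (R₁ ω, R₂ ω, X ω, Y ω)) hJ
      (fun j t => (t.1, (t.2.2.1 j, (maskPre t.2.2.1 j, maskSuf t.2.2.2 j, t.2.1, j))))
      (fun z => z.2.2.2.2.2) (fun j t => rfl)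
  have e4 : H μ (fun ω => (maskPre (X ω) (J ω), maskSuf (Y ω) (J ω), R₂ ω, J ω))
      = Real.logb 2 n + (1 / (n : ℝ)) * ∑ j, H μ (fun ω =>
          (maskPre (X ω) j, maskSuf (Y ω) j, R₂ ω, j)) :=
    H_uniform_index hn μ hμ J (fun ω => (R₁ ω, R₂ ω, X ω, Y ω)) hJ
      (fun j t => (maskPre t.2.2.1 j, maskSuf t.2.2.2 j, t.2.1, j))
      (fun z => z.2.2.2) (fun j t => rfl)
  have e2Y : H μ (fun ω => (Y ω (J ω), (maskPre (X ω) (J ω), maskSuf (Y ω) (J ω), R₂ ω, J ω)))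
      = Real.logb 2 n + (1 / (n : ℝ)) * ∑ j, H μ (fun ω =>
          (Y ω j, (maskPre (X ω) j, maskSuf (Y ω) j, R₂ ω, j))) :=
    H_uniform_index hn μ hμ J (fun ω => (R₁ ω, R₂ ω, X ω, Y ω)) hJ
      (fun j t => (t.2.2.2 j, (maskPre t.2.2.1 j, maskSuf t.2.2.2 j, t.2.1, j)))
      (fun z => z.2.2.2.2) (fun j t => rfl)
  have e3Y : H μ (fun ω => (R₁ ω, (Y ω (J ω),
        (maskPre (X ω) (J ω), maskSuf (Y ω) (J ω), R₂ ω, J ω))))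
      = Real.logb 2 n + (1 / (n : ℝ)) * ∑ j, H μ (fun ω =>
          (R₁ ω, (Y ω j, (maskPre (X ω) j, maskSuf (Y ω) j, R₂ ω, j)))) :=
    H_uniform_index hn μ hμ J (fun ω => (R₁ ω, R₂ ω, X ω, Y ω)) hJ
      (fun j t => (t.1, (t.2.2.2 j, (maskPre t.2.2.1 j, maskSuf t.2.2.2 j, t.2.1, j))))
      (fun z => z.2.2.2.2.2) (fun j t => rfl)
  have sumX : condMI μ R₁ (fun ω => X ω (J ω))
      (fun ω => (maskPre (X ω) (J ω), maskSuf (Y ω) (J ω), R₂ ω, J ω))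
      = (1 / (n : ℝ)) * ∑ j, condMI μ R₁ (fun ω => X ω j)
          (fun ω => (maskPre (X ω) j, maskSuf (Y ω) j, R₂ ω, j)) := by
    simp only [condMI]
    rw [e1, e2, e3, e4]
    rw [Finset.sum_sub_distrib, Finset.sum_sub_distrib, Finset.sum_add_distrib]
    ring
  have sumY : condMI μ R₁ (fun ω => Y ω (J ω))
      (fun ω => (maskPre (X ω) (J ω), maskSuf (Y ω) (J ω), R₂ ω, J ω))
      = (1 / (n : ℝ)) * ∑ j, condMI μ R₁ (fun ω => Y ω j)
          (fun ω => (maskPre (X ω) j, maskSuf (Y ω) j, R₂ ω, j)) := by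
    simp only [condMI]
    rw [e1, e2Y, e3Y, e4]
    rw [Finset.sum_sub_distrib, Finset.sum_sub_distrib, Finset.sum_add_distrib]
    ring
  -- Step 2: telescoping identity at a fixed index
  have tel : ∀ j : Fin n,
      condMI μ R₁ (fun ω => X ω j) (fun ω => (maskPre (X ω) j, maskSuf (Y ω) j, R₂ ω, j))
      - condMI μ R₁ (fun ω => Y ω j) (fun ω => (maskPre (X ω) j, maskSuf (Y ω) j, R₂ ω, j))
      = ψ ((j : ℕ) + 1) - ψ (j : ℕ) := by
    intro j
    have detX : H μ (fun ω => (X ω j, (maskPre (X ω) j, maskSuf (Y ω) j, R₂ ω, j)))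
          = H μ (fun ω => ((fun i : Fin n => if (i : ℕ) < (j : ℕ) + 1 then some (X ω i) else none),
              (fun i : Fin n => if (j : ℕ) + 1 ≤ (i : ℕ) then some (Y ω i) else none), R₂ ω))
        ∧ H μ (fun ω => (R₁ ω, (X ω j, (maskPre (X ω) j, maskSuf (Y ω) j, R₂ ω, j))))
          = H μ (fun ω => (R₁ ω,
              ((fun i : Fin n => if (i : ℕ) < (j : ℕ) + 1 then some (X ω i) else none),
              (fun i : Fin n => if (j : ℕ) + 1 ≤ (i : ℕ) then some (Y ω i) else none), R₂ ω))) := by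
      refine H_pair_congr' μ R₁ _ _
        (fun z => ((fun i => if (i : ℕ) = (j : ℕ) then some z.1 else z.2.1 i),
          z.2.2.1, z.2.2.2.1))
        (fun u => ((u.1 j).getD x₀,
          ((fun i => if (i : ℕ) < (j : ℕ) then u.1 i else none),
           (fun i => if (j : ℕ) < (i : ℕ) then u.2.1 i else none), u.2.2, j)))
        (fun ω => ?_) (fun ω => ?_)
      · refine Prod.ext ?_ (Prod.ext ?_ rfl)
        · funext i
          simp only [maskPre]
          by_cases h : (i : ℕ) = (j : ℕ)
          · have hij : i = j := Fin.val_injective h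
            subst hij
            simp
          · rw [if_neg h]
            by_cases h2 : (i : ℕ) < (j : ℕ)
            · rw [if_pos h2, if_pos (by omega)]
            · rw [if_neg h2, if_neg (by omega)]
        · funext i
          simp only [maskSuf]
          by_cases h : (j : ℕ) < (i : ℕ)
          · rw [if_pos h, if_pos (by omega)]
          · rw [if_neg h, if_neg (by omega)]
      · refine Prod.ext ?_ (Prod.ext ?_ (Prod.ext ?_ rfl))
        · show (if (j : ℕ) < (j : ℕ) + 1 then some (X ω j) else none).getD x₀ = X ω j
          rw [if_pos (Nat.lt_succ_self _)]
          rfl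
        · funext i
          simp only [maskPre]
          by_cases h : (i : ℕ) < (j : ℕ)
          · rw [if_pos h, if_pos (by omega : (i : ℕ) < (j : ℕ) + 1), if_pos h]
          · rw [if_neg h, if_neg h]
        · funext i
          simp only [maskSuf]
          by_cases h : (j : ℕ) < (i : ℕ)
          · rw [if_pos h, if_pos (by omega : (j : ℕ) + 1 ≤ (i : ℕ)), if_pos h]
          · rw [if_neg h, if_neg h]
    have detY : H μ (fun ω => (Y ω j, (maskPre (X ω) j, maskSuf (Y ω) j, R₂ ω, j)))
          = H μ (fun ω => ((fun i : Fin n => if (i : ℕ) < (j : ℕ) then some (X ω i) else none),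
              (fun i : Fin n => if (j : ℕ) ≤ (i : ℕ) then some (Y ω i) else none), R₂ ω))
        ∧ H μ (fun ω => (R₁ ω, (Y ω j, (maskPre (X ω) j, maskSuf (Y ω) j, R₂ ω, j))))
          = H μ (fun ω => (R₁ ω,
              ((fun i : Fin n => if (i : ℕ) < (j : ℕ) then some (X ω i) else none),
              (fun i : Fin n => if (j : ℕ) ≤ (i : ℕ) then some (Y ω i) else none), R₂ ω))) := by
      refine H_pair_congr' μ R₁ _ _
        (fun z => (z.2.1, (fun i => if (i : ℕ) = (j : ℕ) then some z.1 else z.2.2.1 i),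
          z.2.2.2.1))
        (fun u => ((u.2.1 j).getD y₀,
          ((fun i => if (i : ℕ) < (j : ℕ) then u.1 i else none),
           (fun i => if (j : ℕ) < (i : ℕ) then u.2.1 i else none), u.2.2, j)))
        (fun ω => ?_) (fun ω => ?_)
      · refine Prod.ext rfl (Prod.ext ?_ rfl)
        funext i
        simp only [maskSuf]
        by_cases h : (i : ℕ) = (j : ℕ)
        · have hij : i = j := Fin.val_injective h
          subst hij
          simp
        · rw [if_neg h]
          by_cases h2 : (j : ℕ) < (i : ℕ)
          · rw [if_pos h2, if_pos (by omega)]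
          · rw [if_neg h2, if_neg (by omega)]
      · refine Prod.ext ?_ (Prod.ext ?_ (Prod.ext ?_ rfl))
        · show (if (j : ℕ) ≤ (j : ℕ) then some (Y ω j) else none).getD y₀ = Y ω j
          rw [if_pos (le_refl _)]
          rfl
        · funext i
          simp only [maskPre]
          by_cases h : (i : ℕ) < (j : ℕ)
          · simp [h]
          · simp [h]
        · funext i
          simp only [maskSuf]
          by_cases h : (j : ℕ) < (i : ℕ)
          · rw [if_pos h, if_pos (by omega : (j : ℕ) ≤ (i : ℕ)), if_pos h]
          · rw [if_neg h, if_neg h]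
    simp only [condMI]
    rw [hψk ((j : ℕ) + 1), hψk (j : ℕ)]
    rw [detX.1, detX.2, detY.1, detY.2]
    ring
  -- Step 3: boundary identifications
  have detBX : H μ (fun ω => (X ω, R₂ ω))
        = H μ (fun ω => ((fun i : Fin n => if (i : ℕ) < n then some (X ω i) else none),
            (fun i : Fin n => if n ≤ (i : ℕ) then some (Y ω i) else none), R₂ ω))
      ∧ H μ (fun ω => (R₁ ω, (X ω, R₂ ω)))
        = H μ (fun ω => (R₁ ω,
            ((fun i : Fin n => if (i : ℕ) < n then some (X ω i) else none),
            (fun i : Fin n => if n ≤ (i : ℕ) then some (Y ω i) else none), R₂ ω))) := by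
    refine H_pair_congr' μ R₁ _ _
      (fun z => ((fun i => some (z.1 i)), (fun _ => none), z.2))
      (fun u => ((fun i => (u.1 i).getD x₀), u.2.2))
      (fun ω => ?_) (fun ω => ?_)
    · refine Prod.ext ?_ (Prod.ext ?_ rfl)
      · funext i
        exact (if_pos i.isLt).symm
      · funext i
        exact (if_neg (Nat.not_le.mpr i.isLt)).symm
    · refine Prod.ext ?_ rfl
      funext i
      show (if (i : ℕ) < n then some (X ω i) else none).getD x₀ = X ω i
      rw [if_pos i.isLt]
      rfl
  have detBY : H μ (fun ω => (Y ω, R₂ ω))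
        = H μ (fun ω => ((fun i : Fin n => if (i : ℕ) < 0 then some (X ω i) else none),
            (fun i : Fin n => if 0 ≤ (i : ℕ) then some (Y ω i) else none), R₂ ω))
      ∧ H μ (fun ω => (R₁ ω, (Y ω, R₂ ω)))
        = H μ (fun ω => (R₁ ω,
            ((fun i : Fin n => if (i : ℕ) < 0 then some (X ω i) else none),
            (fun i : Fin n => if 0 ≤ (i : ℕ) then some (Y ω i) else none), R₂ ω))) := by
    refine H_pair_congr' μ R₁ _ _
      (fun z => ((fun _ => none), (fun i => some (z.1 i)), z.2))
      (fun u => ((fun i => (u.2.1 i).getD y₀), u.2.2))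
      (fun ω => ?_) (fun ω => ?_)
    · refine Prod.ext ?_ (Prod.ext ?_ rfl)
      · funext i
        show (none : Option 𝒳) = if (i : ℕ) < 0 then some (X ω i) else none
        rw [if_neg (Nat.not_lt_zero _)]
      · funext i
        show some (Y ω i) = if 0 ≤ (i : ℕ) then some (Y ω i) else none
        rw [if_pos (Nat.zero_le _)]
    · refine Prod.ext ?_ rfl
      funext i
      show (if 0 ≤ (i : ℕ) then some (Y ω i) else none).getD y₀ = Y ω i
      rw [if_pos (Nat.zero_le _)]
      rfl
  have lhs : condMI μ R₁ X R₂ - condMI μ R₁ Y R₂ = ψ n - ψ 0 := by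
    simp only [condMI]
    rw [hψk n, hψk 0]
    rw [detBX.1, detBX.2, detBY.1, detBY.2]
    ring
  have hsum : (∑ j, condMI μ R₁ (fun ω => X ω j)
        (fun ω => (maskPre (X ω) j, maskSuf (Y ω) j, R₂ ω, j)))
      - (∑ j, condMI μ R₁ (fun ω => Y ω j)
        (fun ω => (maskPre (X ω) j, maskSuf (Y ω) j, R₂ ω, j)))
      = ψ n - ψ 0 := by
    rw [← Finset.sum_sub_distrib]
    rw [Finset.sum_congr rfl (fun j _ => tel j)]
    rw [show (∑ j : Fin n, (ψ ((j : ℕ) + 1) - ψ (j : ℕ)))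
        = ∑ k ∈ Finset.range n, (ψ (k + 1) - ψ k) from
      Fin.sum_univ_eq_sum_range (fun k => ψ (k + 1) - ψ k) n]
    exact Finset.sum_range_sub ψ n
  rw [sumX, sumY, lhs, ← hsum]
  field_simp


end CRGen
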